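/- Let G be a simple graph on a finite vertex set V and let B ⊆ A ⊆ V. Let < be a linear order on A such that: (i) for all v, w ∈ A, v < w implies N(v) ∖ A ⊆ N(w) ∖ A; (ii) for all v, w ∈ B, v < w implies N(v) ∖ B ⊆ N(w) ∖ B; and (iii) for all v, w ∈ A ∖ B, v < w implies N(v) ∩ B ⊆ N(w) ∩ B. Let X ⊆ B and Y ⊆ A ∖ B be cluster sets of G such that X ∪ Y is also a cluster set of G. Then rep(X ∪ Y) = rep(rep(X) ∪ rep(Y)), where rep denotes the representative with respect to <. -/

import Mathlib

/-- An induced matching in the cut of `G` at `A`, witnessed by endpoint functions `x` (inside `A`)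
and `y` (outside `A`). -/
def IsCutIM {V : Type*} (G : SimpleGraph V) (A : Set V) {k : ℕ} (x y : Fin k → V) : Prop :=
  Function.Injective x ∧ Function.Injective y ∧
    (∀ i, x i ∈ A) ∧ (∀ i, y i ∉ A) ∧
    (∀ i, G.Adj (x i) (y i)) ∧ (∀ i j, i ≠ j → ¬ G.Adj (x i) (y j))

/-- The cut of `G` at `A` has an induced matching of size `k`. -/
def CutIM {V : Type*} (G : SimpleGraph V) (A : Set V) (k : ℕ) : Prop :=
  ∃ x y : Fin k → V, IsCutIM G A x y

/-- `v` and `w` lie in `S` and are joined by a path inside the induced subgraph `G[S]`. -/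
def InducedReach {V : Type*} (G : SimpleGraph V) (S : Set V) (v w : V) : Prop :=
  ∃ (hv : v ∈ S) (hw : w ∈ S), (G.induce S).Reachable ⟨v, hv⟩ ⟨w, hw⟩

/-- The connected component of `v` in the induced subgraph `G[S]`, as a subset of `S`. -/
def indComp {V : Type*} (G : SimpleGraph V) (S : Set V) (v : V) : Set V :=
  {w | InducedReach G S v w}

/-- `S` is a cluster set of `G`: every connected component of `G[S]` is a complete graph, i.e.
any two distinct vertices in the same component of `G[S]` are adjacent. -/
def IsClusterSet {V : Type*} (G : SimpleGraph V) (S : Set V) : Prop :=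
  ∀ v w, InducedReach G S v w → v ≠ w → G.Adj v w

/-- `lt` is a chain order on `A` (w.r.t. `G`): a (strict) linear order on `A` such that `v < w`
implies `N(v) ∖ A ⊆ N(w) ∖ A`. -/
structure ChainOrderOn {V : Type*} (G : SimpleGraph V) (A : Set V) (lt : V → V → Prop) : Prop where
  trans : ∀ ⦃a⦄, a ∈ A → ∀ ⦃b⦄, b ∈ A → ∀ ⦃c⦄, c ∈ A → lt a b → lt b c → lt a c
  irrefl : ∀ a ∈ A, ¬ lt a a
  total : ∀ a ∈ A, ∀ b ∈ A, a ≠ b → lt a b ∨ lt b a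
  chain : ∀ a ∈ A, ∀ b ∈ A, lt a b → G.neighborSet a \ A ⊆ G.neighborSet b \ A

/-- `m` is the `lt`-maximum element of `S`. -/
def IsMaxOf {V : Type*} (lt : V → V → Prop) (S : Set V) (m : V) : Prop :=
  m ∈ S ∧ ∀ x ∈ S, x ≠ m → lt x m

/-- `m` is the `lt`-minimum element of `S`. -/
def IsMinOf {V : Type*} (lt : V → V → Prop) (S : Set V) (m : V) : Prop :=
  m ∈ S ∧ ∀ x ∈ S, x ≠ m → lt m x

/-- `S` and `S'` are `lt`-equivalent (w.r.t. `G`): both are empty, or, listing the connected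
components of `G[S]` (resp. `G[S']`) by strictly decreasing `lt`-maximum vertex, the first
components have the same maximum `m` (which is then the overall maximum) and the same minimum,
and either both lists stop there, or both have a second component and these have the same
maximum. -/
def RepEquiv {V : Type*} (G : SimpleGraph V) (lt : V → V → Prop) (S S' : Set V) : Prop :=
  (S = ∅ ↔ S' = ∅) ∧
  (S.Nonempty → ∃ m, IsMaxOf lt S m ∧ IsMaxOf lt S' m ∧
    (∃ t, IsMinOf lt (indComp G S m) t ∧ IsMinOf lt (indComp G S' m) t) ∧
    ((S \ indComp G S m = ∅ ∧ S' \ indComp G S' m = ∅) ∨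
      (∃ m₂, IsMaxOf lt (S \ indComp G S m) m₂ ∧ IsMaxOf lt (S' \ indComp G S' m) m₂)))

/-- The representative of `S` w.r.t. the order `lt`: the `lt`-maximum and `lt`-minimum of the
first component of `G[S]` (the one containing the overall maximum of `S`), together with the
`lt`-maximum of the second component if there is one; `rep ∅ = ∅`. -/
def rep {V : Type*} (G : SimpleGraph V) (lt : V → V → Prop) (S : Set V) : Set V :=
  {m | IsMaxOf lt S m} ∪
    {t | ∃ m, IsMaxOf lt S m ∧ IsMinOf lt (indComp G S m) t} ∪
    {h | ∃ m, IsMaxOf lt S m ∧ IsMaxOf lt (S \ indComp G S m) h}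

/-- `lt` is a strict total order on the set `A`. -/
structure StrictTotalOn {V : Type*} (lt : V → V → Prop) (A : Set V) : Prop where
  trans : ∀ ⦃a⦄, a ∈ A → ∀ ⦃b⦄, b ∈ A → ∀ ⦃c⦄, c ∈ A → lt a b → lt b c → lt a c
  irrefl : ∀ a ∈ A, ¬ lt a a
  total : ∀ a ∈ A, ∀ b ∈ A, a ≠ b → lt a b ∨ lt b a

section Helpers

variable {V : Type*}

lemma indComp_subset (G : SimpleGraph V) (S : Set V) (v : V) :
    indComp G S v ⊆ S := by
  rintro w ⟨hv, hw, -⟩; exact hw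

lemma mem_indComp_self (G : SimpleGraph V) {S : Set V} {v : V} (hv : v ∈ S) :
    v ∈ indComp G S v := ⟨hv, hv, SimpleGraph.Reachable.refl _⟩

lemma reach_mono (G : SimpleGraph V) {S T : Set V} (hTS : T ⊆ S) {v w : V}
    (h : InducedReach G T v w) : InducedReach G S v w := by
  obtain ⟨hv, hw, hr⟩ := h
  exact ⟨hTS hv, hTS hw,
    hr.map (⟨Set.inclusion hTS, fun {a b} hab => hab⟩ : G.induce T →g G.induce S)⟩

lemma indComp_mono (G : SimpleGraph V) {S T : Set V} (hTS : T ⊆ S) (v : V) :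
    indComp G T v ⊆ indComp G S v := fun _ h => reach_mono G hTS h

lemma reach_trans {G : SimpleGraph V} {S : Set V} {u v w : V}
    (hA : InducedReach G S u v) (hB : InducedReach G S v w) : InducedReach G S u w := by
  obtain ⟨hu, hv, r1⟩ := hA
  obtain ⟨hv', hw, r2⟩ := hB
  exact ⟨hu, hw, r1.trans r2⟩

lemma reach_symm {G : SimpleGraph V} {S : Set V} {u v : V}
    (hA : InducedReach G S u v) : InducedReach G S v u := by
  obtain ⟨hu, hv, r⟩ := hA
  exact ⟨hv, hu, r.symm⟩

lemma indComp_trans {G : SimpleGraph V} {S : Set V} {u v : V}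
    (h : u ∈ indComp G S v) : indComp G S u ⊆ indComp G S v :=
  fun _ hw => reach_trans h hw

lemma indComp_closed {G : SimpleGraph V} {S : Set V} {u v w : V}
    (hu : u ∈ indComp G S v) (hw : w ∈ S) (h : G.Adj u w) : w ∈ indComp G S v := by
  obtain ⟨hv, hu', r⟩ := hu
  refine ⟨hv, hw, r.trans (SimpleGraph.Adj.reachable ?_)⟩
  exact h

lemma adj_of_indComp {G : SimpleGraph V} {S : Set V} {v u w : V}
    (hS : IsClusterSet G S) (hu : u ∈ indComp G S v) (hw : w ∈ indComp G S v)
    (hne : u ≠ w) : G.Adj u w :=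
  hS u w (reach_trans (reach_symm hu) hw) hne

lemma cluster_mono {G : SimpleGraph V} {S T : Set V} (hTS : T ⊆ S)
    (h : IsClusterSet G S) : IsClusterSet G T :=
  fun v w hr hne => h v w (reach_mono G hTS hr) hne

lemma isMaxOf_unique {lt : V → V → Prop} {A S : Set V} {m m' : V}
    (hto : StrictTotalOn lt A) (hS : S ⊆ A)
    (h : IsMaxOf lt S m) (h' : IsMaxOf lt S m') : m = m' := by
  by_contra hne
  exact hto.irrefl m (hS h.1)
    (hto.trans (hS h.1) (hS h'.1) (hS h.1) (h'.2 m h.1 hne) (h.2 m' h'.1 (Ne.symm hne)))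

lemma StrictTotalOn.flip {lt : V → V → Prop} {A : Set V} (hto : StrictTotalOn lt A) :
    StrictTotalOn (fun a b => lt b a) A :=
  ⟨fun _ ha _ hb _ hc h1 h2 => hto.trans hc hb ha h2 h1, hto.irrefl,
    fun a ha b hb hne => (hto.total a ha b hb hne).symm⟩

lemma isMinOf_unique {lt : V → V → Prop} {A S : Set V} {m m' : V}
    (hto : StrictTotalOn lt A) (hS : S ⊆ A)
    (h : IsMinOf lt S m) (h' : IsMinOf lt S m') : m = m' :=
  isMaxOf_unique hto.flip hS h h'

lemma exists_isMaxOf {lt : V → V → Prop} {A : Set V} (hto : StrictTotalOn lt A)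
    {S : Set V} (hS : S ⊆ A) (hfin : S.Finite) (hne : S.Nonempty) :
    ∃ m, IsMaxOf lt S m := by
  classical
  revert hS hne
  refine Set.Finite.induction_on
    (motive := fun s _ => s ⊆ A → s.Nonempty → ∃ m, IsMaxOf lt s m) S hfin
    (fun _ hne => absurd hne (by simp)) ?_
  intro a s ha hsfin ih hS hne
  have haA : a ∈ A := hS (Set.mem_insert _ _)
  have hsA : s ⊆ A := fun x hx => hS (Set.mem_insert_of_mem _ hx)
  rcases Set.eq_empty_or_nonempty s with rfl | hsne
  · refine ⟨a, Set.mem_insert _ _, ?_⟩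
    intro x hx hxa
    rcases Set.mem_insert_iff.1 hx with rfl | hxs
    · exact absurd rfl hxa
    · exact absurd hxs (Set.notMem_empty x)
  · obtain ⟨m, hm⟩ := ih hsA hsne
    have hmA : m ∈ A := hsA hm.1
    rcases eq_or_ne a m with rfl | hne'
    · refine ⟨a, Set.mem_insert _ _, ?_⟩
      intro x hx hxa
      rcases Set.mem_insert_iff.1 hx with rfl | hxs
      · exact absurd rfl hxa
      · exact hm.2 x hxs hxa
    · rcases hto.total a haA m hmA hne' with h | h
      · refine ⟨m, Set.mem_insert_of_mem _ hm.1, ?_⟩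
        intro x hx hxm
        rcases Set.mem_insert_iff.1 hx with rfl | hxs
        · exact h
        · exact hm.2 x hxs hxm
      · refine ⟨a, Set.mem_insert _ _, ?_⟩
        intro x hx hxa
        rcases Set.mem_insert_iff.1 hx with rfl | hxs
        · exact absurd rfl hxa
        · rcases eq_or_ne x m with rfl | hxm
          · exact h
          · exact hto.trans (hsA hxs) hmA haA (hm.2 x hxs hxm) h

lemma exists_isMinOf {lt : V → V → Prop} {A : Set V} (hto : StrictTotalOn lt A)
    {S : Set V} (hS : S ⊆ A) (hfin : S.Finite) (hne : S.Nonempty) :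
    ∃ m, IsMinOf lt S m :=
  exists_isMaxOf hto.flip hS hfin hne

lemma mem_rep_max {G : SimpleGraph V} {lt : V → V → Prop} {S : Set V} {m : V}
    (h : IsMaxOf lt S m) : m ∈ rep G lt S := Or.inl (Or.inl h)

lemma mem_rep_min {G : SimpleGraph V} {lt : V → V → Prop} {S : Set V} {m t : V}
    (h : IsMaxOf lt S m) (h' : IsMinOf lt (indComp G S m) t) : t ∈ rep G lt S :=
  Or.inl (Or.inr ⟨m, h, h'⟩)

lemma mem_rep_snd {G : SimpleGraph V} {lt : V → V → Prop} {S : Set V} {m z : V}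
    (h : IsMaxOf lt S m) (h' : IsMaxOf lt (S \ indComp G S m) z) : z ∈ rep G lt S :=
  Or.inr ⟨m, h, h'⟩

lemma rep_subset (G : SimpleGraph V) (lt : V → V → Prop) (S : Set V) :
    rep G lt S ⊆ S := by
  rintro z ((h | ⟨m, hm, ht⟩) | ⟨m, hm, hh⟩)
  · exact h.1
  · exact indComp_subset G S m ht.1
  · exact hh.1.1

lemma rep_eq_of_data (G : SimpleGraph V) {lt : V → V → Prop} {A S S' : Set V}
    (hto : StrictTotalOn lt A) (hS : S ⊆ A) (hS' : S' ⊆ A) {m t : V}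
    (hm : IsMaxOf lt S m) (hm' : IsMaxOf lt S' m)
    (ht : IsMinOf lt (indComp G S m) t) (ht' : IsMinOf lt (indComp G S' m) t)
    (hsec : (S \ indComp G S m = ∅ ∧ S' \ indComp G S' m = ∅) ∨
      ∃ m₂, IsMaxOf lt (S \ indComp G S m) m₂ ∧ IsMaxOf lt (S' \ indComp G S' m) m₂) :
    rep G lt S = rep G lt S' := by
  have hCA : indComp G S m ⊆ A := (indComp_subset G S m).trans hS
  have hCA' : indComp G S' m ⊆ A := (indComp_subset G S' m).trans hS'
  have e1 : {z | IsMaxOf lt S z} = {z | IsMaxOf lt S' z} := by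
    ext z
    constructor
    · intro h
      have := isMaxOf_unique hto hS h hm
      exact this ▸ hm'
    · intro h
      have := isMaxOf_unique hto hS' h hm'
      exact this ▸ hm
  have e2 : {z | ∃ m', IsMaxOf lt S m' ∧ IsMinOf lt (indComp G S m') z} =
      {z | ∃ m', IsMaxOf lt S' m' ∧ IsMinOf lt (indComp G S' m') z} := by
    ext z
    constructor
    · rintro ⟨m', h1, h2⟩
      obtain rfl := isMaxOf_unique hto hS h1 hm
      obtain rfl := isMinOf_unique hto hCA h2 ht
      exact ⟨m', hm', ht'⟩
    · rintro ⟨m', h1, h2⟩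
      obtain rfl := isMaxOf_unique hto hS' h1 hm'
      obtain rfl := isMinOf_unique hto hCA' h2 ht'
      exact ⟨m', hm, ht⟩
  have e3 : {z | ∃ m', IsMaxOf lt S m' ∧ IsMaxOf lt (S \ indComp G S m') z} =
      {z | ∃ m', IsMaxOf lt S' m' ∧ IsMaxOf lt (S' \ indComp G S' m') z} := by
    ext z
    constructor
    · rintro ⟨m', h1, h2⟩
      obtain rfl := isMaxOf_unique hto hS h1 hm
      rcases hsec with ⟨he, _⟩ | ⟨m₂, ha, hb⟩
      · rw [he] at h2
        exact absurd h2.1 (Set.notMem_empty z)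
      · obtain rfl := isMaxOf_unique hto (Set.diff_subset.trans hS) h2 ha
        exact ⟨m', hm', hb⟩
    · rintro ⟨m', h1, h2⟩
      obtain rfl := isMaxOf_unique hto hS' h1 hm'
      rcases hsec with ⟨_, he⟩ | ⟨m₂, ha, hb⟩
      · rw [he] at h2
        exact absurd h2.1 (Set.notMem_empty z)
      · obtain rfl := isMaxOf_unique hto (Set.diff_subset.trans hS') h2 hb
        exact ⟨m', hm, ha⟩
  unfold rep
  rw [e1, e2, e3]

/-- Key structural lemma: if `z ∈ X` lies in the component of the maximum `m` of `S = X ∪ Y`,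
then the maximum `mX` of `X` also lies in that component, and `z` lies in the component of
`mX` in `G[X]`. -/
lemma side_comp {G : SimpleGraph V} {lt : V → V → Prop} {A S X Y : Set V}
    (hto : StrictTotalOn lt A) (hXA : X ⊆ A) (hYA : Y ⊆ A)
    (hcross : ∀ x ∈ X, ∀ x' ∈ X, lt x x' → ∀ y ∈ Y, G.Adj x y → G.Adj x' y)
    (hSeq : S = X ∪ Y) (hSc : IsClusterSet G S)
    {m mX z : V} (hm : IsMaxOf lt S m) (hmX : IsMaxOf lt X mX)
    (hz : z ∈ X) (hzC : z ∈ indComp G S m) :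
    mX ∈ indComp G S m ∧ z ∈ indComp G X mX := by
  have hXS : X ⊆ S := hSeq ▸ Set.subset_union_left
  have hmXC : mX ∈ indComp G S m := by
    rcases eq_or_ne z m with rfl | hzm
    · have hzmax : IsMaxOf lt X z := ⟨hz, fun x hx h => hm.2 x (hXS hx) h⟩
      obtain rfl := isMaxOf_unique hto hXA hzmax hmX
      exact hzC
    · have hadj : G.Adj m z :=
        adj_of_indComp hSc (mem_indComp_self G hm.1) hzC (Ne.symm hzm)
      rcases (hSeq ▸ hm.1 : m ∈ X ∪ Y) with hmX' | hmY
      · have hmmax : IsMaxOf lt X m := ⟨hmX', fun x hx h => hm.2 x (hXS hx) h⟩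
        obtain rfl := isMaxOf_unique hto hXA hmX hmmax
        exact mem_indComp_self G hm.1
      · rcases eq_or_ne z mX with rfl | hzmX
        · exact hzC
        · have hlt : lt z mX := hmX.2 z hz hzmX
          have hadj' : G.Adj mX m := hcross z hz mX hmX.1 hlt m hmY hadj.symm
          exact indComp_closed (mem_indComp_self G hm.1) (hXS hmX.1) hadj'.symm
  refine ⟨hmXC, ?_⟩
  rcases eq_or_ne z mX with rfl | hzmX
  · exact mem_indComp_self G hz
  · exact indComp_closed (mem_indComp_self G hmX.1) hz
      (adj_of_indComp hSc hmXC hzC (Ne.symm hzmX))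

end Helpers

theorem stmt_12 {V : Type*} [Fintype V] (G : SimpleGraph V) (A B : Set V) (hBA : B ⊆ A)
    (lt : V → V → Prop) (hto : StrictTotalOn lt A)
    (h1 : ∀ v ∈ A, ∀ w ∈ A, lt v w → G.neighborSet v \ A ⊆ G.neighborSet w \ A)
    (h2 : ∀ v ∈ B, ∀ w ∈ B, lt v w → G.neighborSet v \ B ⊆ G.neighborSet w \ B)
    (h3 : ∀ v ∈ A \ B, ∀ w ∈ A \ B, lt v w → G.neighborSet v ∩ B ⊆ G.neighborSet w ∩ B)
    (X Y : Set V) (hX : X ⊆ B) (hY : Y ⊆ A \ B)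
    (hXc : IsClusterSet G X) (hYc : IsClusterSet G Y) (hXYc : IsClusterSet G (X ∪ Y)) :
    rep G lt (X ∪ Y) = rep G lt (rep G lt X ∪ rep G lt Y) := by
  classical
  have hXA : X ⊆ A := fun x hx => hBA (hX hx)
  have hYA : Y ⊆ A := fun y hy => (hY hy).1
  have cross1 : ∀ x ∈ X, ∀ x' ∈ X, lt x x' → ∀ y ∈ Y, G.Adj x y → G.Adj x' y := by
    intro x hx x' hx' hlt y hy hadj
    exact (h2 x (hX hx) x' (hX hx') hlt ⟨hadj, (hY hy).2⟩).1
  have cross2 : ∀ y ∈ Y, ∀ y' ∈ Y, lt y y' → ∀ x ∈ X, G.Adj y x → G.Adj y' x := by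
    intro y hy y' hy' hlt x hx hadj
    exact (h3 y (hY hy) y' (hY hy') hlt ⟨hadj, hX hx⟩).1
  set S : Set V := X ∪ Y with hSdef
  have hSeq' : S = Y ∪ X := by rw [hSdef, Set.union_comm]
  have hSA : S ⊆ A := Set.union_subset hXA hYA
  set S' : Set V := rep G lt X ∪ rep G lt Y with hS'def
  have hS'S : S' ⊆ S := Set.union_subset
    ((rep_subset G lt X).trans Set.subset_union_left)
    ((rep_subset G lt Y).trans Set.subset_union_right)
  have hS'A : S' ⊆ A := hS'S.trans hSA
  show rep G lt S = rep G lt S'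
  rcases Set.eq_empty_or_nonempty S with hSe | hSne
  · have hS'e : S' = ∅ := Set.subset_empty_iff.1 (hSe ▸ hS'S)
    rw [hSe, hS'e]
  · obtain ⟨m, hm⟩ := exists_isMaxOf hto hSA (Set.toFinite S) hSne
    have hmS' : m ∈ S' := by
      rcases (hm.1 : m ∈ X ∪ Y) with hmX | hmY
      · exact Or.inl (mem_rep_max ⟨hmX, fun x hx h => hm.2 x (Set.subset_union_left hx) h⟩)
      · exact Or.inr (mem_rep_max ⟨hmY, fun x hx h => hm.2 x (Set.subset_union_right hx) h⟩)
    have hmS'max : IsMaxOf lt S' m := ⟨hmS', fun x hx h => hm.2 x (hS'S hx) h⟩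
    have hCA : indComp G S m ⊆ A := (indComp_subset G S m).trans hSA
    obtain ⟨t, ht⟩ := exists_isMinOf hto hCA (Set.toFinite _) ⟨m, mem_indComp_self G hm.1⟩
    have htC : t ∈ indComp G S m := ht.1
    have htS' : t ∈ S' := by
      rcases (indComp_subset G S m htC : t ∈ X ∪ Y) with htX | htY
      · obtain ⟨mX, hmX⟩ := exists_isMaxOf hto hXA (Set.toFinite X) ⟨t, htX⟩
        obtain ⟨hmXC, htDX⟩ := side_comp hto hXA hYA cross1 hSdef hXYc hm hmX htX htC
        have hDXC : indComp G X mX ⊆ indComp G S m :=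
          (indComp_mono G Set.subset_union_left mX).trans (indComp_trans hmXC)
        exact Or.inl (mem_rep_min hmX ⟨htDX, fun x hx h => ht.2 x (hDXC hx) h⟩)
      · obtain ⟨mY, hmY⟩ := exists_isMaxOf hto hYA (Set.toFinite Y) ⟨t, htY⟩
        obtain ⟨hmYC, htDY⟩ := side_comp hto hYA hXA cross2 hSeq' hXYc hm hmY htY htC
        have hDYC : indComp G Y mY ⊆ indComp G S m :=
          (indComp_mono G Set.subset_union_right mY).trans (indComp_trans hmYC)
        exact Or.inr (mem_rep_min hmY ⟨htDY, fun x hx h => ht.2 x (hDYC hx) h⟩)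
    have htmin' : IsMinOf lt (indComp G S' m) t := by
      constructor
      · rcases eq_or_ne t m with rfl | htm
        · exact mem_indComp_self G hmS'
        · exact indComp_closed (mem_indComp_self G hmS') htS'
            (adj_of_indComp hXYc (mem_indComp_self G hm.1) htC (Ne.symm htm))
      · intro z hz hne
        exact ht.2 z (indComp_mono G hS'S m hz) hne
    have hCsub' : ∀ z ∈ S', z ∉ indComp G S' m → z ∉ indComp G S m := by
      intro z hz hz' hzC
      rcases eq_or_ne z m with rfl | hzm
      · exact hz' (mem_indComp_self G hz)
      · exact hz' (indComp_closed (mem_indComp_self G hmS') hz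
          (adj_of_indComp hXYc (mem_indComp_self G hm.1) hzC (Ne.symm hzm)))
    have hsecond : (S \ indComp G S m = ∅ ∧ S' \ indComp G S' m = ∅) ∨
        ∃ m₂, IsMaxOf lt (S \ indComp G S m) m₂ ∧ IsMaxOf lt (S' \ indComp G S' m) m₂ := by
      rcases Set.eq_empty_or_nonempty (S \ indComp G S m) with he | hne2
      · left
        refine ⟨he, Set.eq_empty_iff_forall_notMem.2 ?_⟩
        rintro z ⟨hz, hz'⟩
        have : z ∈ S \ indComp G S m := ⟨hS'S hz, hCsub' z hz hz'⟩
        rw [he] at this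
        exact this
      · right
        obtain ⟨m₂, hm₂⟩ := exists_isMaxOf hto (Set.diff_subset.trans hSA) (Set.toFinite _) hne2
        have hm₂C : m₂ ∉ indComp G S m := hm₂.1.2
        have hm₂S' : m₂ ∈ S' := by
          rcases (hm₂.1.1 : m₂ ∈ X ∪ Y) with hX2 | hY2
          · obtain ⟨mX, hmX⟩ := exists_isMaxOf hto hXA (Set.toFinite X) ⟨m₂, hX2⟩
            by_cases hmXC : mX ∈ indComp G S m
            · have hDXC : indComp G X mX ⊆ indComp G S m :=
                (indComp_mono G Set.subset_union_left mX).trans (indComp_trans hmXC)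
              refine Or.inl (mem_rep_snd hmX ⟨⟨hX2, fun h => hm₂C (hDXC h)⟩, ?_⟩)
              intro x hx hne
              have hxC : x ∉ indComp G S m := fun hxC =>
                hx.2 (side_comp hto hXA hYA cross1 hSdef hXYc hm hmX hx.1 hxC).2
              exact hm₂.2 x ⟨Set.subset_union_left hx.1, hxC⟩ hne
            · refine Or.inl (mem_rep_max ⟨hX2, ?_⟩)
              intro x hx hne
              have hxC : x ∉ indComp G S m := fun hxC =>
                hmXC (side_comp hto hXA hYA cross1 hSdef hXYc hm hmX hx hxC).1
              exact hm₂.2 x ⟨Set.subset_union_left hx, hxC⟩ hne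
          · obtain ⟨mY, hmY⟩ := exists_isMaxOf hto hYA (Set.toFinite Y) ⟨m₂, hY2⟩
            by_cases hmYC : mY ∈ indComp G S m
            · have hDYC : indComp G Y mY ⊆ indComp G S m :=
                (indComp_mono G Set.subset_union_right mY).trans (indComp_trans hmYC)
              refine Or.inr (mem_rep_snd hmY ⟨⟨hY2, fun h => hm₂C (hDYC h)⟩, ?_⟩)
              intro x hx hne
              have hxC : x ∉ indComp G S m := fun hxC =>
                hx.2 (side_comp hto hYA hXA cross2 hSeq' hXYc hm hmY hx.1 hxC).2
              exact hm₂.2 x ⟨Set.subset_union_right hx.1, hxC⟩ hne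
            · refine Or.inr (mem_rep_max ⟨hY2, ?_⟩)
              intro x hx hne
              have hxC : x ∉ indComp G S m := fun hxC =>
                hmYC (side_comp hto hYA hXA cross2 hSeq' hXYc hm hmY hx hxC).1
              exact hm₂.2 x ⟨Set.subset_union_right hx, hxC⟩ hne
        refine ⟨m₂, hm₂, ⟨hm₂S', fun h => hm₂C (indComp_mono G hS'S m h)⟩, ?_⟩
        intro z hz hne
        exact hm₂.2 z ⟨hS'S hz.1, hCsub' z hz.1 hz.2⟩ hne
    exact rep_eq_of_data G hto hSA hS'A hm hmS'max ht htmin' hsecond
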